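/- Let 1 ≤ k ≤ r < n and A = (a_{i+j-1}) an n×n Hankel matrix over a field F with A_k nonsingular, and let x = (x_1,...,x_k) solve A_k x^T = (a_{k+1},...,a_{2k})^T. Then A satisfies rank(A) ≤ r and A_d singular for all k < d ≤ n if and only if the relation a_{k+t} = x_1 a_t + ... + x_k a_{t+k-1} holds for all t = 1,...,2n-r-1. -/

import Mathlib

open Matrix

lemma det_antitri_ne_zero {F : Type*} [Field F] {q : ℕ} (D : Matrix (Fin q) (Fin q) F)
    (h0 : ∀ i j : Fin q, (i : ℕ) + (j : ℕ) + 1 < q → D i j = 0)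
    (hd : ∀ i : Fin q, D i (Fin.rev i) ≠ 0) : D.det ≠ 0 := by
  have h := Matrix.det_permute' Fin.revPerm D
  set σ : Equiv.Perm (Fin q) := Fin.revPerm with hσ
  have htri : (D.submatrix id σ).BlockTriangular OrderDual.toDual := by
    intro i j hij
    simp only [OrderDual.toDual_lt_toDual] at hij
    apply h0
    have hj := j.is_lt
    have hji : (i:ℕ) < (j:ℕ) := hij
    simp only [σ, Fin.revPerm_apply, Fin.val_rev, id_eq]
    omega
  have hdet : (D.submatrix id σ).det = ∏ i, D i (Fin.rev i) := by
    rw [Matrix.det_of_lowerTriangular _ htri]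
    rfl
  have hne : (D.submatrix id σ).det ≠ 0 := by
    rw [hdet]; exact Finset.prod_ne_zero_iff.2 fun i _ => hd i
  rw [h] at hne
  intro h0'
  rw [h0'] at hne
  simp at hne

lemma rank_lt_of_det_eq_zero {F : Type*} [Field F] {m : ℕ} (B : Matrix (Fin m) (Fin m) F)
    (h : B.det = 0) : B.rank < m := by
  rcases lt_or_eq_of_le (B.rank_le_card_height.trans (Fintype.card_fin m).le) with hlt | heq
  · exact hlt
  obtain ⟨v, hv0, hv⟩ := Matrix.exists_mulVec_eq_zero_iff.2 h
  exfalso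
  have hr : LinearMap.range B.mulVecLin = ⊤ := by
    apply Submodule.eq_top_of_finrank_eq
    rw [← Matrix.rank, heq]
    simp [Module.finrank_fintype_fun_eq_card]
  have hsurj : Function.Surjective B.mulVecLin := LinearMap.range_eq_top.1 hr
  have hinj : Function.Injective B.mulVecLin :=
    (LinearMap.injective_iff_surjective).2 hsurj
  apply hv0
  apply hinj
  simpa [Matrix.mulVecLin_apply] using hv

lemma hankel_key {F : Type*} [Field F] {k m q t₀ : ℕ} (a : ℕ → F) (x : Fin k → F)
    (B : Matrix (Fin m) (Fin m) F) (hB : ∀ i j : Fin m, B i j = a ((i:ℕ) + (j:ℕ) + 1))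
    (hkm : k ≤ m)
    (hAk : (Matrix.of fun i j : Fin k => a ((i:ℕ) + (j:ℕ) + 1)).det ≠ 0)
    (b : ℕ → F) (hbdef : ∀ t, b t = a (k + t) - ∑ s : Fin k, x s * a (t + (s:ℕ)))
    (hb0 : ∀ t, 1 ≤ t → t < t₀ → b t = 0) (hbt : b t₀ ≠ 0)
    (ρ γ : Fin q → ℕ)
    (hρm : ∀ l, ρ l < m) (hγm : ∀ l, γ l < m) (hρk : ∀ l, k ≤ ρ l)
    (hρt : ∀ l, ρ l < t₀)
    (hγmono : StrictMono γ)
    (hanti : ∀ l, ρ l + γ (Fin.rev l) + 1 = t₀ + k) :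
    k + q ≤ B.rank := by
  classical
  set ι : Fin k → Fin m := Fin.castLE hkm with hι
  have hRs : ∀ (l : Fin q) (s : Fin k), ρ l - k + (s:ℕ) < m := by
    intro l s; have := hρm l; have := hρk l; have := s.is_lt; omega
  set R : Fin q → Fin m := fun l => ⟨ρ l, hρm l⟩ with hR
  set Rs : Fin q → Fin k → Fin m := fun l s => ⟨ρ l - k + (s:ℕ), hRs l s⟩ with hRsdef
  set G : Fin q → Fin m := fun l => ⟨γ l, hγm l⟩ with hG
  set P : Matrix (Fin k ⊕ Fin q) (Fin m) F := Matrix.of fun p j =>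
    Sum.elim (fun i => if j = ι i then (1:F) else 0)
      (fun l => (if j = R l then (1:F) else 0) - ∑ s : Fin k, if j = Rs l s then x s else 0) p
    with hP
  set C : Matrix (Fin m) (Fin k ⊕ Fin q) F :=
    Matrix.of fun j p => if j = Sum.elim ι G p then (1:F) else 0 with hC
  set M : Matrix (Fin k ⊕ Fin q) (Fin k ⊕ Fin q) F := P * B * C with hM
  have hMe : ∀ p p', M p p' = (P * B) p (Sum.elim ι G p') := by
    intro p p'
    simp only [hM, Matrix.mul_apply, hC, Matrix.of_apply, mul_ite, mul_one, mul_zero]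
    rw [Finset.sum_ite_eq' Finset.univ (Sum.elim ι G p')]
    simp
  have hPB1 : ∀ (i : Fin k) (j : Fin m), (P * B) (Sum.inl i) j = B (ι i) j := by
    intro i j
    simp only [Matrix.mul_apply, hP, Matrix.of_apply, Sum.elim_inl, ite_mul, one_mul, zero_mul]
    rw [Finset.sum_ite_eq' Finset.univ (ι i)]
    simp
  have hPB2 : ∀ (l : Fin q) (j : Fin m), (P * B) (Sum.inr l) j = b (ρ l - k + (j:ℕ) + 1) := by
    intro l j
    have hplk := hρk l
    simp only [Matrix.mul_apply, hP, Matrix.of_apply, Sum.elim_inr, sub_mul, ite_mul, one_mul,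
      zero_mul, Finset.sum_sub_distrib, Finset.sum_mul]
    rw [Finset.sum_ite_eq' Finset.univ (R l)]
    rw [Finset.sum_comm]
    have hs : ∀ s : Fin k,
        (∑ j' : Fin m, if j' = Rs l s then x s * B j' j else 0) = x s * B (Rs l s) j := by
      intro s
      rw [Finset.sum_ite_eq' Finset.univ (Rs l s)]
      simp
    rw [Finset.sum_congr rfl fun s _ => hs s]
    simp only [Finset.mem_univ, if_true]
    rw [hbdef]
    have h1 : B (R l) j = a (k + (ρ l - k + (j:ℕ) + 1)) := by
      rw [hB]; congr 1; simp only [hR]; omega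
    have h2 : ∀ s : Fin k, B (Rs l s) j = a (ρ l - k + (j:ℕ) + 1 + (s:ℕ)) := by
      intro s; rw [hB]; congr 1; simp only [hRsdef]; omega
    rw [h1, Finset.sum_congr rfl fun s _ => by rw [h2 s]]
  set A₁ : Matrix (Fin k) (Fin k) F := Matrix.of fun i j : Fin k => a ((i:ℕ) + (j:ℕ) + 1) with hA₁
  set B₁ : Matrix (Fin k) (Fin q) F := Matrix.of fun i l => B (ι i) (G l) with hB₁
  set D : Matrix (Fin q) (Fin q) F := Matrix.of fun l l' => b (ρ l - k + γ l' + 1) with hD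
  have hblock : M = Matrix.fromBlocks A₁ B₁ 0 D := by
    ext p p'
    cases p with
    | inl i =>
      cases p' with
      | inl i' =>
        rw [hMe, hPB1]
        simp only [Sum.elim_inl, Matrix.fromBlocks_apply₁₁, hA₁, Matrix.of_apply]
        rw [hB]; rfl
      | inr l' =>
        rw [hMe, hPB1]
        simp [Sum.elim_inr, hB₁]
    | inr l =>
      cases p' with
      | inl i' =>
        rw [hMe, hPB2]
        simp only [Sum.elim_inl, Matrix.fromBlocks_apply₂₁, Matrix.zero_apply]
        apply hb0
        · omega
        · have h1 := hρt l
          have h2 := hρk l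
          have h3 : (ι i' : ℕ) = (i' : ℕ) := rfl
          have h4 := i'.is_lt
          omega
      | inr l' =>
        rw [hMe, hPB2]
        simp only [Sum.elim_inr, Matrix.fromBlocks_apply₂₂, hD, Matrix.of_apply]
        rfl
  have hdetD : D.det ≠ 0 := by
    apply det_antitri_ne_zero
    · intro l l' hll'
      simp only [hD, Matrix.of_apply]
      apply hb0
      · omega
      · have h1 : (l' : ℕ) < (Fin.rev l : ℕ) := by
          simp only [Fin.val_rev]; omega
        have h2 : γ (l' : Fin q) < γ (Fin.rev l) := hγmono (by exact Fin.lt_def.2 h1)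
        have h3 := hanti l
        have h4 := hρk l
        omega
    · intro l
      simp only [hD, Matrix.of_apply]
      have h3 := hanti l
      have h4 := hρk l
      have : ρ l - k + γ (Fin.rev l) + 1 = t₀ := by omega
      rw [this]; exact hbt
  have hdetM : M.det ≠ 0 := by
    rw [hblock, Matrix.det_fromBlocks_zero₂₁]
    exact mul_ne_zero hAk hdetD
  have h1 : M.rank = k + q := by
    rw [Matrix.rank_of_isUnit M ((Matrix.isUnit_iff_isUnit_det M).2 (isUnit_iff_ne_zero.2 hdetM))]
    simp
  have h2 : M.rank ≤ B.rank :=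
    le_trans (Matrix.rank_mul_le_left (P * B) C) (Matrix.rank_mul_le_right P B)
  omega

/-- Let `1 ≤ k ≤ r < n` and let `A` be an `n × n` Hankel matrix with `(i,j)` entry
`a_{i+j-1}` (1-based) such that the leading principal submatrix `A_k` is nonsingular, and
let `x = (x_1, ..., x_k)` solve `A_k xᵀ = (a_{k+1}, ..., a_{2k})ᵀ`.  Then `rank A ≤ r` and
`A_d` is singular for all `k < d ≤ n` iff the relation
`a_{k+t} = ∑_{s=1}^k x_s a_{t+s-1}` holds for all `t = 1, ..., 2n - r - 1`. -/
theorem hankel_delta_rank_iff (F : Type*) [Field F] (n k r : ℕ) (hk1 : 1 ≤ k)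
    (hkr : k ≤ r) (hrn : r < n) (hk : k ≤ n) (a : ℕ → F)
    (A : Matrix (Fin n) (Fin n) F)
    (hA : ∀ i j : Fin n, A i j = a ((i : ℕ) + (j : ℕ) + 1))
    (hAk : (A.submatrix (Fin.castLE hk) (Fin.castLE hk)).det ≠ 0)
    (x : Fin k → F)
    (hx : ∀ t : ℕ, 1 ≤ t → t ≤ k → a (k + t) = ∑ s : Fin k, x s * a (t + (s : ℕ))) :
    (A.rank ≤ r ∧ ∀ (d : ℕ) (hd : d ≤ n), k < d →
        (A.submatrix (Fin.castLE hd) (Fin.castLE hd)).det = 0)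
      ↔ ∀ t : ℕ, 1 ≤ t → t ≤ 2 * n - r - 1 →
          a (k + t) = ∑ s : Fin k, x s * a (t + (s : ℕ)) := by
  classical
  set b : ℕ → F := fun t => a (k + t) - ∑ s : Fin k, x s * a (t + (s : ℕ)) with hbdef
  have hAk' : (Matrix.of fun i j : Fin k => a ((i : ℕ) + (j : ℕ) + 1)).det ≠ 0 := by
    have he : A.submatrix (Fin.castLE hk) (Fin.castLE hk)
        = Matrix.of fun i j : Fin k => a ((i : ℕ) + (j : ℕ) + 1) := by
      ext i j
      simp only [Matrix.submatrix_apply, Matrix.of_apply]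
      rw [hA]; rfl
    rwa [he] at hAk
  constructor
  · rintro ⟨hrank, hsing⟩
    suffices h : ∀ t, 1 ≤ t → t ≤ 2 * n - r - 1 → b t = 0 by
      intro t ht1 ht2
      exact sub_eq_zero.1 (h t ht1 ht2)
    intro t
    induction t using Nat.strong_induction_on with
    | _ t IH =>
    intro ht1 ht2
    by_cases htk : t ≤ k
    · have := hx t ht1 htk
      simp only [hbdef]
      rw [this, sub_self]
    push_neg at htk
    by_contra hbt
    have hb0 : ∀ t', 1 ≤ t' → t' < t → b t' = 0 := fun t' h1 h2 => IH t' h2 h1 (by omega)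
    by_cases htn : t ≤ n
    · have hdet0 := hsing t htn htk
      have hrk := hankel_key (k := k) (m := t) (q := t - k) (t₀ := t) a x
          (A.submatrix (Fin.castLE htn) (Fin.castLE htn))
          (fun i j => by simp only [Matrix.submatrix_apply]; rw [hA]; rfl) (by omega) hAk' b
          (fun _ => rfl) hb0 hbt (fun l => k + (l : ℕ)) (fun l => k + (l : ℕ))
          (fun l => by have := l.is_lt; show k + (l : ℕ) < t; omega)
          (fun l => by have := l.is_lt; show k + (l : ℕ) < t; omega)
          (fun l => by show k ≤ k + (l : ℕ); omega)
          (fun l => by have := l.is_lt; show k + (l : ℕ) < t; omega)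
          (fun l l' h => by
            have h' : (l : ℕ) < (l' : ℕ) := h
            show k + (l : ℕ) < k + (l' : ℕ); omega)
          (fun l => by
            have h := l.is_lt
            show k + (l : ℕ) + (k + ((Fin.rev l) : ℕ)) + 1 = t + k
            simp only [Fin.val_rev]
            omega)
      have hlt := rank_lt_of_det_eq_zero _ hdet0
      omega
    · push_neg at htn
      have hrk := hankel_key (k := k) (m := n) (q := r + 1 - k) (t₀ := t) a x A hA hk hAk' b
          (fun _ => rfl) hb0 hbt
          (fun l => t - n + k + (l : ℕ)) (fun l => n - (r + 1 - k) + (l : ℕ))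
          (fun l => by have := l.is_lt; show t - n + k + (l : ℕ) < n; omega)
          (fun l => by have := l.is_lt; show n - (r + 1 - k) + (l : ℕ) < n; omega)
          (fun l => by show k ≤ t - n + k + (l : ℕ); omega)
          (fun l => by have := l.is_lt; show t - n + k + (l : ℕ) < t; omega)
          (fun l l' h => by
            have h' : (l : ℕ) < (l' : ℕ) := h
            show n - (r + 1 - k) + (l : ℕ) < n - (r + 1 - k) + (l' : ℕ); omega)
          (fun l => by
            have h := l.is_lt
            show t - n + k + (l : ℕ) + (n - (r + 1 - k) + ((Fin.rev l) : ℕ)) + 1 = t + k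
            simp only [Fin.val_rev]
            omega)
      omega
  · intro hrec
    constructor
    · have hAr : A.rank = Module.finrank F (Submodule.span F (Set.range A)) := by
        rw [← Matrix.rank_transpose, Matrix.rank_eq_finrank_span_cols]; rfl
      set g : Fin r → (Fin n → F) := fun l =>
        if h : (l : ℕ) < k then A ⟨(l : ℕ), h.trans_le hk⟩
        else A ⟨n - r + (l : ℕ), by have := l.is_lt; omega⟩ with hg
      have hrow : ∀ (N : ℕ) (i : Fin n), (i : ℕ) ≤ N → A i ∈ Submodule.span F (Set.range g) := by
        intro N
        induction N with
        | zero =>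
          intro i hi
          have h0 : (i : ℕ) < k := by omega
          have he : A i = g ⟨(i : ℕ), by omega⟩ := by
            simp only [hg, dif_pos h0]
          rw [he]
          exact Submodule.subset_span ⟨_, rfl⟩
        | succ N IHN =>
          intro i hi
          by_cases h0 : (i : ℕ) < k
          · have he : A i = g ⟨(i : ℕ), by omega⟩ := by
              simp only [hg, dif_pos h0]
            rw [he]
            exact Submodule.subset_span ⟨_, rfl⟩
          · by_cases h1 : n - r + k ≤ (i : ℕ)
            · have hl : (i : ℕ) + r - n < r := by have := i.is_lt; omega
              have he : A i = g ⟨(i : ℕ) + r - n, hl⟩ := by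
                have hnk : ¬ (((⟨(i : ℕ) + r - n, hl⟩ : Fin r) : ℕ) < k) := by
                  show ¬ ((i : ℕ) + r - n < k); omega
                simp only [hg]
                rw [dif_neg hnk]
                have hidx : (⟨n - r + ((i : ℕ) + r - n), by omega⟩ : Fin n) = i :=
                  Fin.ext (by show n - r + ((i : ℕ) + r - n) = (i : ℕ); omega)
                exact (congrArg A hidx).symm
              rw [he]
              exact Submodule.subset_span ⟨_, rfl⟩
            · push_neg at h0 h1
              have hAi : A i = ∑ s : Fin k, x s •
                  A ⟨(i : ℕ) - k + (s : ℕ), by have := s.is_lt; have := i.is_lt; omega⟩ := by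
                funext j
                rw [Finset.sum_apply]
                simp only [Pi.smul_apply, smul_eq_mul]
                rw [hA]
                have hj := j.is_lt
                have hrec' := hrec ((i : ℕ) - k + (j : ℕ) + 1) (by omega) (by omega)
                calc a ((i : ℕ) + (j : ℕ) + 1)
                    = a (k + ((i : ℕ) - k + (j : ℕ) + 1)) := by congr 1; omega
                  _ = ∑ s : Fin k, x s * a ((i : ℕ) - k + (j : ℕ) + 1 + (s : ℕ)) := hrec'
                  _ = _ := by
                      apply Finset.sum_congr rfl
                      intro s _
                      rw [hA]
                      congr 2
                      show (i : ℕ) - k + (j : ℕ) + 1 + (s : ℕ) = (i : ℕ) - k + (s : ℕ) + (j : ℕ) + 1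
                      omega
              rw [hAi]
              apply Submodule.sum_mem
              intro s _
              apply Submodule.smul_mem
              apply IHN
              have := s.is_lt
              show (i : ℕ) - k + (s : ℕ) ≤ N
              omega
      have hsub : Submodule.span F (Set.range A) ≤ Submodule.span F (Set.range g) := by
        rw [Submodule.span_le]
        rintro _ ⟨i, rfl⟩
        exact hrow n i i.is_lt.le
      have hfin : Module.finrank F (Submodule.span F (Set.range g)) ≤ r := by
        have h1 := finrank_span_le_card (R := F) (Set.range g)
        have h2 : (Set.range g).toFinset.card ≤ r := by
          rw [Set.toFinset_range]
          exact Finset.card_image_le.trans (by simp)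
        omega
      rw [hAr]
      exact le_trans (Submodule.finrank_mono hsub) hfin
    · intro d hd hkd
      rw [← Matrix.exists_vecMul_eq_zero_iff]
      set c : ℕ → F := fun i => if i = k then 1 else if h : i < k then -(x ⟨i, h⟩) else 0 with hc
      refine ⟨fun i : Fin d => c (i : ℕ), ?_, ?_⟩
      · intro h0
        have h1 : c k = 0 := by
          have := congrFun h0 ⟨k, by omega⟩
          simpa using this
        simp [hc] at h1
      · funext j
        have hj := j.is_lt
        show (∑ i : Fin d, c (i : ℕ) * (A.submatrix (Fin.castLE hd) (Fin.castLE hd)) i j) = 0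
        have hent : ∀ i : Fin d,
            c (i : ℕ) * (A.submatrix (Fin.castLE hd) (Fin.castLE hd)) i j
              = c (i : ℕ) * a ((i : ℕ) + (j : ℕ) + 1) := by
          intro i
          rw [Matrix.submatrix_apply, hA]
          rfl
        rw [Finset.sum_congr rfl fun i _ => hent i]
        rw [Fin.sum_univ_eq_sum_range (fun i => c i * a (i + (j : ℕ) + 1)) d]
        have hzero : ∀ i ∈ Finset.range d, i ∉ Finset.range (k + 1) →
            c i * a (i + (j : ℕ) + 1) = 0 := by
          intro i _ hi
          simp only [Finset.mem_range, not_lt] at hi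
          have : c i = 0 := by
            simp only [hc]
            rw [if_neg (by omega), dif_neg (by omega)]
          rw [this, zero_mul]
        rw [← Finset.sum_subset (Finset.range_subset_range.2 (by omega : k + 1 ≤ d)) hzero]
        rw [Finset.sum_range_succ]
        have hck : c k = 1 := by simp [hc]
        have hlow : (∑ i ∈ Finset.range k, c i * a (i + (j : ℕ) + 1))
            = -∑ s : Fin k, x s * a ((j : ℕ) + 1 + (s : ℕ)) := by
          rw [← Fin.sum_univ_eq_sum_range (fun i => c i * a (i + (j : ℕ) + 1)) k]
          rw [← Finset.sum_neg_distrib]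
          apply Finset.sum_congr rfl
          intro s _
          have hs := s.is_lt
          have hcs : c (s : ℕ) = -(x s) := by
            simp only [hc]
            rw [if_neg (by omega), dif_pos hs]
          rw [hcs]
          rw [show (s : ℕ) + (j : ℕ) + 1 = (j : ℕ) + 1 + (s : ℕ) from by omega, neg_mul]
        rw [hlow, hck, one_mul]
        have := hrec ((j : ℕ) + 1) (by omega) (by omega)
        rw [show k + ((j : ℕ) + 1) = k + (j : ℕ) + 1 by omega] at this
        rw [this]
        ring
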